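/- Let σ ∈ (0,2), π ∈ 𝔄^σ, and let κ be a scaling function with scaling factor l. Assume both: (a) there is N₂ > 0 such that for every R > 0, ∫(|y|∧1)π̃_R(dy) ≤ N₂ if σ ∈ (0,1), ∫(|y|²∧1)π̃_R(dy) ≤ N₂ if σ = 1, and ∫_{|y|≤1}|y|²π̃_R(dy) + ∫_{|y|>1}|y|π̃_R(dy) ≤ N₂ if σ ∈ (1,2); and (b) there is n₁ > 0 with ∫_{|y|≤1}|ξ·y|²π̃_R(dy) ≥ n₁ for all R > 0 and all unit vectors ξ. Then there is a constant c = c(n₁,N₂,l) > 0 such that for all ξ ∈ ℝ^d: c|ψ^π(ξ)| ≤ |Re ψ^π(ξ)| ≤ |ψ^π(ξ)| and |Im ψ^π(ξ)| ≤ c^{−1}|Re ψ^π(ξ)|. -/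

import Mathlib

open MeasureTheory Filter
open scoped ENNReal RealInnerProductSpace

noncomputable section

abbrev Rd (d : ℕ) := EuclideanSpace ℝ (Fin d)

variable {d : ℕ}

/-- The truncation function `χ_σ`. -/
def chiSigma (σ : ℝ) (y : Rd d) : ℝ :=
  if σ < 1 then 0 else if σ = 1 then (if ‖y‖ ≤ 1 then 1 else 0) else 1

/-- Membership in the class `𝔄^σ`. -/
def MemA (σ : ℝ) (ν : Measure (Rd d)) : Prop :=
  ν {0} = 0 ∧
  (∫⁻ y, ENNReal.ofReal (min (‖y‖ ^ 2) 1) ∂ν) < ∞ ∧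
  σ = sInf {α : ℝ | α < 2 ∧ (∫⁻ y in {y : Rd d | ‖y‖ ≤ 1}, ENNReal.ofReal (‖y‖ ^ α) ∂ν) < ∞} ∧
  (1 < σ → (∫⁻ y in {y : Rd d | 1 < ‖y‖}, ENNReal.ofReal ‖y‖ ∂ν) < ∞) ∧
  (σ = 1 → ∀ R R' : ℝ, 0 < R → R < R' →
    (∫ y in {y : Rd d | R < ‖y‖ ∧ ‖y‖ ≤ R'}, y ∂ν) = 0)

/-- The symbol `ψ^π`. -/
def symb (σ : ℝ) (ν : Measure (Rd d)) (ξ : Rd d) : ℂ :=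
  ∫ y, (Complex.exp (Complex.I * ((2 * Real.pi * ⟪ξ, y⟫ : ℝ) : ℂ))
        - 1 - Complex.I * ((2 * Real.pi * chiSigma σ y * ⟪ξ, y⟫ : ℝ) : ℂ)) ∂ν

/-- The rescaled measure `π̃_R = κ(R) π_R`. -/
def scaledM (κ : ℝ → ℝ) (ν : Measure (Rd d)) (R : ℝ) : Measure (Rd d) :=
  ENNReal.ofReal (κ R) • ν.map (fun y => R⁻¹ • y)

/-- `κ` is a scaling function with scaling factor `l`. -/
structure ScalingPair (κ l : ℝ → ℝ) : Prop where
  pos : ∀ r > 0, 0 < κ r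
  cont : ContinuousOn κ (Set.Ioi 0)
  zero : Tendsto κ (nhdsWithin 0 (Set.Ioi 0)) (nhds 0)
  top : Tendsto κ atTop atTop
  l_mono : MonotoneOn l (Set.Ioi 0)
  l_cont : ContinuousOn l (Set.Ioi 0)
  l_zero : Tendsto l (nhdsWithin 0 (Set.Ioi 0)) (nhds 0)
  scale : ∀ ε > 0, ∀ r > 0, κ (ε * r) ≤ l ε * κ r
section St11Aux

open Real

private lemma st11_sin_sub_sq_nn (t : ℝ) (ht : 0 ≤ t) : |Real.sin t - t| ≤ t ^ 2 := by
  rw [abs_sub_comm, abs_of_nonneg (sub_nonneg.2 (Real.sin_le ht))]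
  rcases le_or_gt t 1 with h1 | h1
  · rcases eq_or_lt_of_le ht with rfl | ht'
    · simp
    · nlinarith [Real.sin_gt_sub_cube ht']
  · rcases le_or_gt t π with h2 | h2
    · nlinarith [Real.sin_nonneg_of_nonneg_of_le_pi ht h2]
    · nlinarith [Real.neg_one_le_sin t, Real.pi_gt_three]

lemma st11_sin_sub_sq (t : ℝ) : |Real.sin t - t| ≤ t ^ 2 := by
  rcases le_or_gt 0 t with h | h
  · exact st11_sin_sub_sq_nn t h
  · have h2 := st11_sin_sub_sq_nn (-t) (by linarith)
    rw [Real.sin_neg] at h2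
    calc |Real.sin t - t| = |(-Real.sin t) - (-t)| := by rw [← abs_neg]; ring_nf
    _ ≤ (-t)^2 := h2
    _ = t^2 := by ring

lemma st11_abs_sin_le_one (t : ℝ) : |Real.sin t| ≤ 1 :=
  abs_le.2 ⟨Real.neg_one_le_sin t, Real.sin_le_one t⟩

lemma st11_one_sub_cos_le_sq (t : ℝ) : 1 - Real.cos t ≤ t ^ 2 / 2 := by
  nlinarith [Real.one_sub_sq_div_two_le_cos (x := t)]

lemma st11_one_sub_cos_le_two (t : ℝ) : 1 - Real.cos t ≤ 2 := by
  nlinarith [Real.neg_one_le_cos t]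

lemma st11_abs_cos_sub_one (t : ℝ) : |Real.cos t - 1| = 1 - Real.cos t := by
  rw [abs_sub_comm, abs_of_nonneg (by nlinarith [Real.cos_le_one t])]

lemma st11_cos_lb {t : ℝ} (ht : |t| ≤ 1/2) : 8 * t ^ 2 ≤ 1 - Real.cos (2 * π * t) := by
  have hπ : (0:ℝ) < π := Real.pi_pos
  have habs : |2 * π * t| ≤ π := by
    rw [abs_mul, abs_of_pos (by positivity : (0:ℝ) < 2 * π)]
    nlinarith
  have h := Real.cos_le_one_sub_mul_cos_sq habs
  have heq : 2 / π ^ 2 * (2 * π * t) ^ 2 = 8 * t ^ 2 := by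
    field_simp
    ring
  nlinarith

lemma st11_re_aux (a b : ℝ) :
    (Complex.exp (Complex.I * (a:ℂ)) - 1 - Complex.I * (b:ℂ)).re = Real.cos a - 1 := by
  rw [mul_comm Complex.I, Complex.exp_mul_I]
  simp [Complex.cos_ofReal_re, Complex.sin_ofReal_re]

lemma st11_im_aux (a b : ℝ) :
    (Complex.exp (Complex.I * (a:ℂ)) - 1 - Complex.I * (b:ℂ)).im = Real.sin a - b := by
  rw [mul_comm Complex.I, Complex.exp_mul_I]
  simp [Complex.cos_ofReal_im, Complex.sin_ofReal_re]

lemma st11_norm_aux (a b : ℝ) :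
    ‖Complex.exp (Complex.I * (a:ℂ)) - 1 - Complex.I * (b:ℂ)‖
      ≤ |Real.cos a - 1| + |Real.sin a - b| := by
  calc ‖Complex.exp (Complex.I * (a:ℂ)) - 1 - Complex.I * (b:ℂ)‖ ≤ |(Complex.exp (Complex.I * (a:ℂ)) - 1 - Complex.I * (b:ℂ)).re|
        + |(Complex.exp (Complex.I * (a:ℂ)) - 1 - Complex.I * (b:ℂ)).im| :=
      Complex.norm_le_abs_re_add_abs_im _
  _ = |Real.cos a - 1| + |Real.sin a - b| := by rw [st11_re_aux, st11_im_aux]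

lemma st11_re_aux1 (a : ℝ) : (Complex.exp (Complex.I * (a:ℂ)) - 1).re = Real.cos a - 1 := by
  have := st11_re_aux a 0
  simpa using this

lemma st11_im_aux1 (a : ℝ) : (Complex.exp (Complex.I * (a:ℂ)) - 1).im = Real.sin a := by
  have := st11_im_aux a 0
  simpa using this

lemma st11_norm_aux1 (a : ℝ) :
    ‖Complex.exp (Complex.I * (a:ℂ)) - 1‖ ≤ |Real.cos a - 1| + |Real.sin a| := by
  have := st11_norm_aux a 0
  simpa using this

lemma st11_integrable_of_dom {α : Type*} [MeasurableSpace α] {μ : Measure α}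
    {E : Type*} [NormedAddCommGroup E] {f : α → E} {D : α → ℝ}
    (hm : AEStronglyMeasurable f μ) (hb : ∀ y, ‖f y‖ ≤ D y)
    (hfin : (∫⁻ y, ENNReal.ofReal (D y) ∂μ) < ⊤) : Integrable f μ := by
  refine ⟨hm, ?_⟩
  rw [MeasureTheory.hasFiniteIntegral_iff_norm]
  exact lt_of_le_of_lt (lintegral_mono fun y => ENNReal.ofReal_le_ofReal (hb y)) hfin

lemma st11_lint_scaled (κ : ℝ → ℝ) (ν : Measure (Rd d)) (R : ℝ) (f : Rd d → ℝ≥0∞)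
    (hf : Measurable f) :
    ∫⁻ y, f y ∂scaledM κ ν R = ENNReal.ofReal (κ R) * ∫⁻ y, f (R⁻¹ • y) ∂ν := by
  rw [scaledM, lintegral_smul_measure, lintegral_map hf (measurable_const_smul _), smul_eq_mul]

lemma st11_lint_scaled_set (κ : ℝ → ℝ) (ν : Measure (Rd d)) (R : ℝ) (f : Rd d → ℝ≥0∞)
    (hf : Measurable f) (s : Set (Rd d)) (hs : MeasurableSet s) :
    ∫⁻ y in s, f y ∂scaledM κ ν R
      = ENNReal.ofReal (κ R) * ∫⁻ y in (fun y : Rd d => R⁻¹ • y) ⁻¹' s, f (R⁻¹ • y) ∂ν := by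
  rw [scaledM, Measure.restrict_smul, lintegral_smul_measure,
    Measure.restrict_map (measurable_const_smul _) hs,
    lintegral_map hf (measurable_const_smul _), smul_eq_mul]

lemma st11_preim_ball (R : ℝ) (hR : 0 < R) :
    (fun y : Rd d => R⁻¹ • y) ⁻¹' {y | ‖y‖ ≤ 1} = {y | ‖y‖ ≤ R} := by
  ext y
  simp only [Set.mem_preimage, Set.mem_setOf_eq, norm_smul, norm_inv, Real.norm_eq_abs,
    abs_of_pos hR]
  rw [inv_mul_le_iff₀ hR, mul_one]

lemma st11_preim_gt (R : ℝ) (hR : 0 < R) :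
    (fun y : Rd d => R⁻¹ • y) ⁻¹' {y | 1 < ‖y‖} = {y | R < ‖y‖} := by
  ext y
  simp only [Set.mem_preimage, Set.mem_setOf_eq, norm_smul, norm_inv, Real.norm_eq_abs,
    abs_of_pos hR]
  rw [lt_inv_mul_iff₀ hR, mul_one]

lemma st11_meas_le (c : ℝ) : MeasurableSet {y : Rd d | ‖y‖ ≤ c} :=
  (isClosed_le continuous_norm continuous_const).measurableSet

lemma st11_meas_gt (c : ℝ) : MeasurableSet {y : Rd d | c < ‖y‖} :=
  (isOpen_lt continuous_const continuous_norm).measurableSet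

end St11Aux
set_option maxHeartbeats 2000000 in
/-- comparability of `ψ^π`, its real part and its imaginary part. -/
theorem statement_11 (d : ℕ) (σ : ℝ) (hσ : σ ∈ Set.Ioo (0:ℝ) 2)
    (ν : Measure (Rd d)) (hν : MemA σ ν)
    (κ l : ℝ → ℝ) (hκ : ScalingPair κ l) (N2 n1 : ℝ) (hn1 : 0 < n1)
    (h1 : σ < 1 → ∀ R > 0,
      (∫⁻ y, ENNReal.ofReal (min ‖y‖ 1) ∂scaledM κ ν R) ≤ ENNReal.ofReal N2)
    (h2 : σ = 1 → ∀ R > 0,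
      (∫⁻ y, ENNReal.ofReal (min (‖y‖ ^ 2) 1) ∂scaledM κ ν R) ≤ ENNReal.ofReal N2)
    (h3 : 1 < σ → ∀ R > 0,
      (∫⁻ y in {y : Rd d | ‖y‖ ≤ 1}, ENNReal.ofReal (‖y‖ ^ 2) ∂scaledM κ ν R)
        + (∫⁻ y in {y : Rd d | 1 < ‖y‖}, ENNReal.ofReal ‖y‖ ∂scaledM κ ν R)
        ≤ ENNReal.ofReal N2)
    (hlow : ∀ R > 0, ∀ ξ : Rd d, ‖ξ‖ = 1 →
      ENNReal.ofReal n1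
        ≤ ∫⁻ y in {y : Rd d | ‖y‖ ≤ 1}, ENNReal.ofReal (⟪ξ, y⟫ ^ 2) ∂scaledM κ ν R) :
    ∃ c : ℝ, 0 < c ∧ ∀ ξ : Rd d,
      c * ‖symb σ ν ξ‖ ≤ |(symb σ ν ξ).re| ∧
      |(symb σ ν ξ).re| ≤ ‖symb σ ν ξ‖ ∧
      |(symb σ ν ξ).im| ≤ c⁻¹ * |(symb σ ν ξ).re| := by
  obtain ⟨hσ0, hσ2⟩ := hσ
  set π := Real.pi with hπdef
  have hπ : (0:ℝ) < π := Real.pi_pos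
  set K : ℝ := 4 * π ^ 2 * max N2 0 / (2 * n1) with hKdef
  have hK0 : 0 ≤ K := by positivity
  have h1K : (0:ℝ) < 1 + K := by positivity
  refine ⟨(1 + K)⁻¹, by positivity, fun ξ => ?_⟩
  rcases eq_or_ne ξ 0 with rfl | hξ0
  · have h0 : symb σ ν (0 : Rd d) = 0 := by
      simp [symb, inner_zero_left]
    rw [h0]
    simp
  -- main case : ξ ≠ 0
  have hξ : 0 < ‖ξ‖ := norm_pos_iff.2 hξ0
  set R : ℝ := (2 * ‖ξ‖)⁻¹ with hRdef
  have hR : 0 < R := by positivity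
  have hRinv : R⁻¹ = 2 * ‖ξ‖ := by rw [hRdef, inv_inv]
  have hhalf : ‖ξ‖ * R = 1 / 2 := by
    rw [hRdef]
    field_simp
  set A : ℝ≥0∞ := ENNReal.ofReal (κ R) with hAdef
  have hκR : 0 < κ R := hκ.pos R hR
  have hA0 : A ≠ 0 := (ENNReal.ofReal_pos.2 hκR).ne'
  have hAtop : A ≠ ⊤ := ENNReal.ofReal_ne_top
  have hAfin : ∀ Z : ℝ≥0∞, A * Z ≤ ENNReal.ofReal N2 → Z < ⊤ := by
    intro Z h
    by_contra htop
    rw [not_lt, top_le_iff] at htop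
    rw [htop, ENNReal.mul_top hA0] at h
    exact ENNReal.ofReal_ne_top (top_le_iff.1 h)
  have hxval : ∀ y : Rd d, ‖R⁻¹ • y‖ = R⁻¹ * ‖y‖ := by
    intro y
    rw [norm_smul, norm_inv, Real.norm_eq_abs, abs_of_pos hR]
  have hxt : ∀ y : Rd d, |⟪ξ, y⟫| ≤ ‖R⁻¹ • y‖ / 2 := by
    intro y
    calc |⟪ξ, y⟫| ≤ ‖ξ‖ * ‖y‖ := abs_real_inner_le_norm ξ y
    _ = ‖R⁻¹ • y‖ / 2 := by rw [hxval, hRinv]; ring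
  have hxle1 : ∀ y : Rd d, ‖y‖ ≤ R → ‖R⁻¹ • y‖ ≤ 1 := by
    intro y hy
    rw [hxval, inv_mul_le_iff₀ hR, mul_one]
    exact hy
  have hxgt1 : ∀ y : Rd d, R < ‖y‖ → 1 < ‖R⁻¹ • y‖ := by
    intro y hy
    rw [hxval, lt_inv_mul_iff₀ hR, mul_one]
    exact hy
  have hinner_cont : Continuous fun y : Rd d => (⟪ξ, y⟫ : ℝ) :=
    continuous_const.inner continuous_id
  -- the real part integrand and its integral
  set Ire : ℝ := ∫ y, (1 - Real.cos (2 * π * ⟪ξ, y⟫)) ∂ν with hIredef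
  have hmin2meas : Measurable fun y : Rd d => ENNReal.ofReal (min (‖y‖ ^ 2) 1) :=
    ((continuous_norm.pow 2).min continuous_const).measurable.ennreal_ofReal
  have hmin2fin : ∀ C : ℝ, (∫⁻ y, ENNReal.ofReal (C * min (‖y‖ ^ 2) 1) ∂ν) < ⊤ := by
    intro C
    rcases le_total C 0 with hC | hC
    · have : ∀ y : Rd d, ENNReal.ofReal (C * min (‖y‖ ^ 2) 1) = 0 := by
        intro y
        rw [ENNReal.ofReal_eq_zero]
        have h0 : (0:ℝ) ≤ min (‖y‖ ^ 2) 1 := le_min (by positivity) one_pos.le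
        nlinarith
      simp only [this]
      simp
    · calc (∫⁻ y, ENNReal.ofReal (C * min (‖y‖ ^ 2) 1) ∂ν)
          = ENNReal.ofReal C * ∫⁻ y, ENNReal.ofReal (min (‖y‖ ^ 2) 1) ∂ν := by
            rw [← lintegral_const_mul _ hmin2meas]
            apply lintegral_congr
            intro y
            rw [ENNReal.ofReal_mul hC]
      _ < ⊤ := ENNReal.mul_lt_top ENNReal.ofReal_lt_top hν.2.1
  have hsqbound : ∀ y : Rd d, ⟪ξ, y⟫ ^ 2 ≤ (‖ξ‖ * ‖y‖) ^ 2 := by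
    intro y
    rw [← sq_abs]
    exact pow_le_pow_left₀ (abs_nonneg _) (abs_real_inner_le_norm ξ y) 2
  have hcosint : Integrable (fun y : Rd d => 1 - Real.cos (2 * π * ⟪ξ, y⟫)) ν := by
    apply st11_integrable_of_dom (D := fun y => (2 * π ^ 2 * ‖ξ‖ ^ 2 + 2) * min (‖y‖ ^ 2) 1)
    · exact (continuous_const.sub
        (Real.continuous_cos.comp (continuous_const.mul hinner_cont))).aestronglyMeasurable
    · intro y
      have h1 := st11_one_sub_cos_le_sq (2 * π * ⟪ξ, y⟫)
      have h2 := st11_one_sub_cos_le_two (2 * π * ⟪ξ, y⟫)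
      have ht2 := hsqbound y
      rw [Real.norm_eq_abs, abs_of_nonneg (by nlinarith [Real.cos_le_one (2 * π * ⟪ξ, y⟫)])]
      rcases le_total ‖y‖ 1 with h | h
      · rw [min_eq_left (by nlinarith [norm_nonneg y])]
        nlinarith [sq_nonneg π, sq_nonneg ‖y‖, norm_nonneg y, sq_nonneg (π * ‖ξ‖ * ‖y‖)]
      · rw [min_eq_right (by nlinarith [norm_nonneg y])]
        nlinarith [sq_nonneg (π * ‖ξ‖)]
    · exact hmin2fin _
  have hIre0 : 0 ≤ Ire := integral_nonneg fun y => by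
    show (0:ℝ) ≤ _
    nlinarith [Real.cos_le_one (2 * π * ⟪ξ, y⟫)]
  have hofIre : ENNReal.ofReal Ire = ∫⁻ y, ENNReal.ofReal (1 - Real.cos (2 * π * ⟪ξ, y⟫)) ∂ν :=
    ofReal_integral_eq_lintegral_ofReal hcosint
      (ae_of_all _ fun y => by
        show (0:ℝ) ≤ 1 - Real.cos (2 * π * ⟪ξ, y⟫)
        nlinarith [Real.cos_le_one (2 * π * ⟪ξ, y⟫)])
  -- E1 : lower bound on the real part
  have h2e : ENNReal.ofReal (2:ℝ) = 2 := by
    norm_num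
  have hE1 : ENNReal.ofReal (2 * n1) ≤ A * ENNReal.ofReal Ire := by
    have he1 : ‖(‖ξ‖⁻¹ • ξ : Rd d)‖ = 1 := by
      rw [norm_smul, norm_inv, norm_norm, inv_mul_cancel₀ hξ.ne']
    have h0 := hlow R hR (‖ξ‖⁻¹ • ξ) he1
    have hms : Measurable fun y : Rd d => ENNReal.ofReal ((⟪(‖ξ‖⁻¹ • ξ : Rd d), y⟫:ℝ) ^ 2) :=
      ((continuous_const.inner continuous_id).pow 2).measurable.ennreal_ofReal
    rw [st11_lint_scaled_set κ ν R _ hms _ (st11_meas_le 1), st11_preim_ball R hR] at h0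
    have hptw : ∀ y : Rd d, ENNReal.ofReal ((⟪(‖ξ‖⁻¹ • ξ : Rd d), R⁻¹ • y⟫:ℝ) ^ 2)
        = ENNReal.ofReal (4 * ⟪ξ, y⟫ ^ 2) := by
      intro y
      congr 1
      rw [real_inner_smul_left, real_inner_smul_right, hRinv]
      field_simp
      ring
    simp only [hptw] at h0
    have hm4 : Measurable fun y : Rd d => ENNReal.ofReal (4 * ⟪ξ, y⟫ ^ 2) :=
      (continuous_const.mul ((hinner_cont).pow 2)).measurable.ennreal_ofReal
    calc ENNReal.ofReal (2 * n1) = 2 * ENNReal.ofReal n1 := by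
          rw [ENNReal.ofReal_mul (by norm_num : (0:ℝ) ≤ 2), h2e]
    _ ≤ 2 * (A * ∫⁻ y in {y : Rd d | ‖y‖ ≤ R}, ENNReal.ofReal (4 * ⟪ξ, y⟫ ^ 2) ∂ν) :=
          mul_le_mul_right h0 2
    _ = A * ∫⁻ y in {y : Rd d | ‖y‖ ≤ R}, 2 * ENNReal.ofReal (4 * ⟪ξ, y⟫ ^ 2) ∂ν := by
          rw [lintegral_const_mul 2 hm4]
          ring
    _ = A * ∫⁻ y in {y : Rd d | ‖y‖ ≤ R}, ENNReal.ofReal (8 * ⟪ξ, y⟫ ^ 2) ∂ν := by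
          congr 1
          apply lintegral_congr
          intro y
          rw [show (8:ℝ) * ⟪ξ, y⟫ ^ 2 = 2 * (4 * ⟪ξ, y⟫ ^ 2) from by ring,
            ENNReal.ofReal_mul (by norm_num : (0:ℝ) ≤ 2), h2e]
    _ ≤ A * ∫⁻ y in {y : Rd d | ‖y‖ ≤ R}, ENNReal.ofReal (1 - Real.cos (2 * π * ⟪ξ, y⟫)) ∂ν := by
          apply mul_le_mul_right
          apply setLIntegral_mono' (st11_meas_le R)
          intro y hy
          apply ENNReal.ofReal_le_ofReal
          have hy' : ‖y‖ ≤ R := hy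
          have ht : |⟪ξ, y⟫| ≤ 1/2 := by
            have h5 := hxt y
            have hx1 := hxle1 y hy'
            linarith
          have := st11_cos_lb ht
          linarith
    _ ≤ A * ∫⁻ y, ENNReal.ofReal (1 - Real.cos (2 * π * ⟪ξ, y⟫)) ∂ν :=
          mul_le_mul_right (setLIntegral_le_lintegral _ _) A
    _ = A * ENNReal.ofReal Ire := by rw [hofIre]
  -- key per-case facts
  -- key per-case facts
  have hremk : ∀ f : Rd d → ℂ, symb σ ν ξ = ∫ y, f y ∂ν → Integrable f ν →
      (∀ y, (f y).re = Real.cos (2 * π * ⟪ξ, y⟫) - 1) → (symb σ ν ξ).re = -Ire := by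
    intro f hsy hint hfre
    have h := integral_re (μ := ν) hint
    simp only [RCLike.re_to_complex] at h
    rw [hsy, ← h]
    calc ∫ y, (f y).re ∂ν = ∫ y, -(1 - Real.cos (2 * π * ⟪ξ, y⟫)) ∂ν := by
          apply integral_congr_ae
          exact ae_of_all _ fun y => by
            show (f y).re = -(1 - Real.cos (2 * π * ⟪ξ, y⟫))
            rw [hfre y]; ring
    _ = -Ire := by rw [integral_neg]
  have himmk : ∀ f : Rd d → ℂ, symb σ ν ξ = ∫ y, f y ∂ν →
      ENNReal.ofReal |(symb σ ν ξ).im| ≤ ∫⁻ y, ENNReal.ofReal ‖f y‖ ∂ν := by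
    intro f hsy
    calc ENNReal.ofReal |(symb σ ν ξ).im| ≤ ENNReal.ofReal ‖symb σ ν ξ‖ :=
        ENNReal.ofReal_le_ofReal (Complex.abs_im_le_norm _)
    _ = ENNReal.ofReal ‖∫ y, f y ∂ν‖ := by rw [hsy]
    _ ≤ ENNReal.ofReal (∫⁻ y, ENNReal.ofReal ‖f y‖ ∂ν).toReal :=
        ENNReal.ofReal_le_ofReal (norm_integral_le_lintegral_norm _)
    _ ≤ _ := ENNReal.ofReal_toReal_le
  have hconstmul : ∀ (C : ℝ) (h : Rd d → ℝ), 0 ≤ C →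
      Measurable (fun y => ENNReal.ofReal (h y)) →
      (∫⁻ y, ENNReal.ofReal (C * h y) ∂ν) = ENNReal.ofReal C * ∫⁻ y, ENNReal.ofReal (h y) ∂ν := by
    intro C h hC hm
    rw [← lintegral_const_mul _ hm]
    apply lintegral_congr
    intro y
    rw [ENNReal.ofReal_mul hC]
  have hm_x2 : Measurable fun y : Rd d => ENNReal.ofReal (‖R⁻¹ • y‖ ^ 2) :=
    ((continuous_const_smul (R⁻¹:ℝ)).norm.pow 2).measurable.ennreal_ofReal
  have hm_x1 : Measurable fun y : Rd d => ENNReal.ofReal ‖R⁻¹ • y‖ :=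
    (continuous_const_smul (R⁻¹:ℝ)).norm.measurable.ennreal_ofReal
  have hm_minx : Measurable fun y : Rd d => ENNReal.ofReal (min ‖R⁻¹ • y‖ 1) :=
    ((continuous_const_smul (R⁻¹:ℝ)).norm.min continuous_const).measurable.ennreal_ofReal
  have hm_minx2 : Measurable fun y : Rd d => ENNReal.ofReal (min (‖R⁻¹ • y‖ ^ 2) 1) :=
    (((continuous_const_smul (R⁻¹:ℝ)).norm.pow 2).min continuous_const).measurable.ennreal_ofReal
  have ht2sq : ∀ y : Rd d, ⟪ξ, y⟫ ^ 2 ≤ (‖R⁻¹ • y‖ / 2) ^ 2 := by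
    intro y
    rw [← sq_abs]
    exact pow_le_pow_left₀ (abs_nonneg _) (hxt y) 2
  have habs2pi : ∀ t : ℝ, |2 * π * t| = 2 * π * |t| := by
    intro t
    rw [abs_mul, abs_of_pos (by positivity : (0:ℝ) < 2 * π)]
  have hcompl : ∀ c : ℝ, {y : Rd d | ‖y‖ ≤ c}ᶜ = {y : Rd d | c < ‖y‖} := by
    intro c
    ext y
    simp [not_le]
  have key : (symb σ ν ξ).re = -Ire ∧
      A * ENNReal.ofReal |(symb σ ν ξ).im|
        ≤ ENNReal.ofReal (4 * π ^ 2) * ENNReal.ofReal N2 := by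
    rcases lt_trichotomy σ 1 with hc | hc | hc
    · -- case σ < 1
      have hsymbeq : symb σ ν ξ
          = ∫ y, (Complex.exp (Complex.I * ((2 * π * ⟪ξ, y⟫ : ℝ) : ℂ)) - 1) ∂ν := by
        have hchi : ∀ y : Rd d, chiSigma σ y = 0 := fun y => by simp [chiSigma, hc]
        simp only [symb, hchi, mul_zero, zero_mul, Complex.ofReal_zero, sub_zero] <;> rfl
      have hnorm1 : ∀ y : Rd d,
          ‖Complex.exp (Complex.I * ((2 * π * ⟪ξ, y⟫ : ℝ) : ℂ)) - 1‖
            ≤ 4 * π ^ 2 * min ‖R⁻¹ • y‖ 1 := by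
        intro y
        have hb := st11_norm_aux1 (2 * π * ⟪ξ, y⟫)
        have ht := hxt y
        have hx0 : (0:ℝ) ≤ ‖R⁻¹ • y‖ := norm_nonneg _
        have hcos := st11_abs_cos_sub_one (2 * π * ⟪ξ, y⟫)
        have h1 := st11_one_sub_cos_le_sq (2 * π * ⟪ξ, y⟫)
        have h2 := st11_one_sub_cos_le_two (2 * π * ⟪ξ, y⟫)
        have hsinb := Real.abs_sin_le_abs (x := 2 * π * ⟪ξ, y⟫)
        have hsin1 := st11_abs_sin_le_one (2 * π * ⟪ξ, y⟫)
        have ht2 := ht2sq y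
        have habs2 := habs2pi ⟪ξ, y⟫
        rcases le_total ‖R⁻¹ • y‖ 1 with h | h
        · rw [min_eq_left h]
          have s1 : |Real.sin (2 * π * ⟪ξ, y⟫)| ≤ π * ‖R⁻¹ • y‖ := by
            rw [habs2] at hsinb
            nlinarith [abs_nonneg ⟪ξ, y⟫]
          have hxx : ‖R⁻¹ • y‖ ^ 2 ≤ ‖R⁻¹ • y‖ := by nlinarith
          have s2 : 1 - Real.cos (2 * π * ⟪ξ, y⟫) ≤ π ^ 2 / 2 * ‖R⁻¹ • y‖ := by
            have e2 := mul_le_mul_of_nonneg_left ht2 (by positivity : (0:ℝ) ≤ 2 * π ^ 2)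
            have e3 := mul_le_mul_of_nonneg_left hxx (by positivity : (0:ℝ) ≤ π ^ 2 / 2)
            linarith [h1, e2, e3]
          rw [hcos] at hb
          have hcoef : (0:ℝ) ≤ 4 * π ^ 2 - π ^ 2 / 2 - π := by nlinarith [Real.pi_gt_three]
          linarith [hb, s1, s2, mul_nonneg hcoef hx0]
        · rw [min_eq_right h]
          rw [hcos] at hb
          nlinarith [Real.pi_gt_three]
      have hZscaled : A * (∫⁻ y, ENNReal.ofReal (min ‖R⁻¹ • y‖ 1) ∂ν) ≤ ENNReal.ofReal N2 := by
        have hmm : Measurable fun y : Rd d => ENNReal.ofReal (min ‖y‖ 1) :=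
          (continuous_norm.min continuous_const).measurable.ennreal_ofReal
        rw [← st11_lint_scaled κ ν R _ hmm]
        exact h1 hc R hR
      have hg : Integrable
          (fun y : Rd d => Complex.exp (Complex.I * ((2 * π * ⟪ξ, y⟫ : ℝ) : ℂ)) - 1) ν := by
        apply st11_integrable_of_dom (D := fun y => 4 * π ^ 2 * min ‖R⁻¹ • y‖ 1)
        · exact ((Complex.continuous_exp.comp (continuous_const.mul
            (Complex.continuous_ofReal.comp (continuous_const.mul hinner_cont)))).sub
            continuous_const).aestronglyMeasurable
        · exact hnorm1
        · rw [hconstmul _ _ (by positivity) hm_minx]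
          exact ENNReal.mul_lt_top ENNReal.ofReal_lt_top (hAfin _ hZscaled)
      refine ⟨hremk _ hsymbeq hg (fun y => st11_re_aux1 _), ?_⟩
      calc A * ENNReal.ofReal |(symb σ ν ξ).im|
          ≤ A * ∫⁻ y, ENNReal.ofReal
              ‖Complex.exp (Complex.I * ((2 * π * ⟪ξ, y⟫ : ℝ) : ℂ)) - 1‖ ∂ν :=
            mul_le_mul_right (himmk _ hsymbeq) A
      _ ≤ A * ∫⁻ y, ENNReal.ofReal (4 * π ^ 2 * min ‖R⁻¹ • y‖ 1) ∂ν :=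
            mul_le_mul_right
              (lintegral_mono fun y => ENNReal.ofReal_le_ofReal (hnorm1 y)) A
      _ = ENNReal.ofReal (4 * π ^ 2) * (A * ∫⁻ y, ENNReal.ofReal (min ‖R⁻¹ • y‖ 1) ∂ν) := by
            rw [hconstmul _ _ (by positivity) hm_minx]
            ring
      _ ≤ ENNReal.ofReal (4 * π ^ 2) * ENNReal.ofReal N2 := mul_le_mul_right hZscaled _
    · -- case σ = 1
      subst hc
      have hsymbeq : symb 1 ν ξ
          = ∫ y, (Complex.exp (Complex.I * ((2 * π * ⟪ξ, y⟫ : ℝ) : ℂ)) - 1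
              - Complex.I * ((if ‖y‖ ≤ 1 then 2 * π * ⟪ξ, y⟫ else 0 : ℝ) : ℂ)) ∂ν := by
        unfold symb
        congr 1
        funext y
        by_cases h : ‖y‖ ≤ 1 <;> simp [chiSigma, h] <;> rfl
      have hg : Integrable (fun y : Rd d =>
          Complex.exp (Complex.I * ((2 * π * ⟪ξ, y⟫ : ℝ) : ℂ)) - 1
            - Complex.I * ((if ‖y‖ ≤ 1 then 2 * π * ⟪ξ, y⟫ else 0 : ℝ) : ℂ)) ν := by
        apply st11_integrable_of_dom (D := fun y => 8 * π ^ 2 * (‖ξ‖ ^ 2 + 1) * min (‖y‖ ^ 2) 1)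
        · have hm1 : Measurable fun y : Rd d => (if ‖y‖ ≤ 1 then 2 * π * ⟪ξ, y⟫ else 0 : ℝ) :=
            Measurable.ite (st11_meas_le 1) (continuous_const.mul hinner_cont).measurable
              measurable_const
          have hm3 : Continuous fun y : Rd d =>
              Complex.exp (Complex.I * ((2 * π * ⟪ξ, y⟫ : ℝ) : ℂ)) - 1 :=
            (Complex.continuous_exp.comp (continuous_const.mul
              (Complex.continuous_ofReal.comp (continuous_const.mul hinner_cont)))).sub
              continuous_const
          exact (hm3.measurable.sub
            ((Complex.measurable_ofReal.comp hm1).const_mul Complex.I)).aestronglyMeasurable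
        · intro y
          have hb := st11_norm_aux (2 * π * ⟪ξ, y⟫) (if ‖y‖ ≤ 1 then 2 * π * ⟪ξ, y⟫ else 0)
          rw [st11_abs_cos_sub_one] at hb
          by_cases h : ‖y‖ ≤ 1
          · rw [if_pos h] at hb
            rw [if_pos h, min_eq_left (by nlinarith [norm_nonneg y])]
            have h1 := st11_one_sub_cos_le_sq (2 * π * ⟪ξ, y⟫)
            have hs := st11_sin_sub_sq (2 * π * ⟪ξ, y⟫)
            have e2 := mul_le_mul_of_nonneg_left (hsqbound y) (by positivity : (0:ℝ) ≤ 6 * π ^ 2)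
            linarith [sq_nonneg (π * ‖ξ‖ * ‖y‖), sq_nonneg (π * ‖y‖)]
          · rw [if_neg h, sub_zero] at hb
            rw [if_neg h, min_eq_right (by nlinarith [norm_nonneg y, not_le.1 h])]
            have h2 := st11_one_sub_cos_le_two (2 * π * ⟪ξ, y⟫)
            have h3' := st11_abs_sin_le_one (2 * π * ⟪ξ, y⟫)
            nlinarith [Real.pi_gt_three, sq_nonneg ‖ξ‖, sq_nonneg (π * ‖ξ‖)]
        · exact hmin2fin _
      have hshell : ∀ a b : ℝ, 0 < a → a < b →
          Integrable (fun y : Rd d => (if ‖y‖ ≤ b then 2 * π * ⟪ξ, y⟫ else 0)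
            - (if ‖y‖ ≤ a then 2 * π * ⟪ξ, y⟫ else 0)) ν ∧
          ∫ y, ((if ‖y‖ ≤ b then 2 * π * ⟪ξ, y⟫ else 0)
            - (if ‖y‖ ≤ a then 2 * π * ⟪ξ, y⟫ else 0)) ∂ν = 0 := by
        intro a b ha hab
        have hSm : MeasurableSet {y : Rd d | a < ‖y‖ ∧ ‖y‖ ≤ b} :=
          (st11_meas_gt a).inter (st11_meas_le b)
        have hfuneq : (fun y : Rd d => (if ‖y‖ ≤ b then 2 * π * ⟪ξ, y⟫ else 0)
            - (if ‖y‖ ≤ a then 2 * π * ⟪ξ, y⟫ else 0))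
            = Set.indicator {y : Rd d | a < ‖y‖ ∧ ‖y‖ ≤ b} (fun y => 2 * π * ⟪ξ, y⟫) := by
          funext y
          by_cases h1' : ‖y‖ ≤ a
          · have h2' : ‖y‖ ≤ b := h1'.trans hab.le
            have hmem : y ∉ {y : Rd d | a < ‖y‖ ∧ ‖y‖ ≤ b} := fun hh => absurd hh.1 (not_lt.2 h1')
            rw [if_pos h2', if_pos h1', Set.indicator_of_notMem hmem]
            ring
          · by_cases h2' : ‖y‖ ≤ b
            · have hmem : y ∈ {y : Rd d | a < ‖y‖ ∧ ‖y‖ ≤ b} := ⟨not_le.1 h1', h2'⟩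
              rw [if_pos h2', if_neg h1', Set.indicator_of_mem hmem]
              ring
            · have hmem : y ∉ {y : Rd d | a < ‖y‖ ∧ ‖y‖ ≤ b} := fun hh => h2' hh.2
              rw [if_neg h2', if_neg h1', Set.indicator_of_notMem hmem]
              ring
        have hSfin : ν {y : Rd d | a < ‖y‖ ∧ ‖y‖ ≤ b} < ⊤ := by
          have hple : ENNReal.ofReal (min (a ^ 2) 1) * ν {y : Rd d | a < ‖y‖ ∧ ‖y‖ ≤ b}
              ≤ ∫⁻ y, ENNReal.ofReal (min (‖y‖ ^ 2) 1) ∂ν := by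
            calc ENNReal.ofReal (min (a ^ 2) 1) * ν {y : Rd d | a < ‖y‖ ∧ ‖y‖ ≤ b}
                = ∫⁻ _ in {y : Rd d | a < ‖y‖ ∧ ‖y‖ ≤ b}, ENNReal.ofReal (min (a ^ 2) 1) ∂ν :=
                  (setLIntegral_const _ _).symm
            _ ≤ ∫⁻ y in {y : Rd d | a < ‖y‖ ∧ ‖y‖ ≤ b}, ENNReal.ofReal (min (‖y‖ ^ 2) 1) ∂ν := by
                  apply setLIntegral_mono' hSm
                  intro y hy
                  exact ENNReal.ofReal_le_ofReal
                    (min_le_min (by nlinarith [hy.1, ha] : a ^ 2 ≤ ‖y‖ ^ 2) le_rfl)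
            _ ≤ ∫⁻ y, ENNReal.ofReal (min (‖y‖ ^ 2) 1) ∂ν := setLIntegral_le_lintegral _ _
          by_contra htop
          rw [not_lt, top_le_iff] at htop
          rw [htop, ENNReal.mul_top
            (ENNReal.ofReal_pos.2 (lt_min (by positivity) one_pos)).ne'] at hple
          exact (hν.2.1).ne (top_le_iff.1 hple)
        haveI hfinM : IsFiniteMeasure (ν.restrict {y : Rd d | a < ‖y‖ ∧ ‖y‖ ≤ b}) :=
          ⟨by rwa [Measure.restrict_apply_univ]⟩
        have hIOn : IntegrableOn (fun y : Rd d => 2 * π * ⟪ξ, y⟫)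
            {y : Rd d | a < ‖y‖ ∧ ‖y‖ ≤ b} ν := by
          refine Integrable.mono' (integrable_const (2 * π * (‖ξ‖ * b)))
            (continuous_const.mul hinner_cont).aestronglyMeasurable ?_
          refine (ae_restrict_iff' hSm).2 (ae_of_all _ fun y hy => ?_)
          rw [Real.norm_eq_abs, habs2pi]
          have h5 := abs_real_inner_le_norm ξ y
          have h6 : ‖ξ‖ * ‖y‖ ≤ ‖ξ‖ * b := mul_le_mul_of_nonneg_left hy.2 (norm_nonneg ξ)
          have := mul_le_mul_of_nonneg_left (h5.trans h6) (by positivity : (0:ℝ) ≤ 2 * π)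
          linarith
        have hIind : Integrable
            (Set.indicator {y : Rd d | a < ‖y‖ ∧ ‖y‖ ≤ b} fun y : Rd d => 2 * π * ⟪ξ, y⟫) ν :=
          hIOn.integrable_indicator hSm
        have hyid : Integrable (fun y : Rd d => y)
            (ν.restrict {y : Rd d | a < ‖y‖ ∧ ‖y‖ ≤ b}) := by
          refine Integrable.mono' (integrable_const b) aestronglyMeasurable_id ?_
          exact (ae_restrict_iff' hSm).2 (ae_of_all _ fun y hy => hy.2)
        refine ⟨by rw [hfuneq]; exact hIind, ?_⟩
        rw [hfuneq, integral_indicator hSm]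
        calc ∫ y in {y : Rd d | a < ‖y‖ ∧ ‖y‖ ≤ b}, 2 * π * ⟪ξ, y⟫ ∂ν
            = (2 * π) * ∫ y in {y : Rd d | a < ‖y‖ ∧ ‖y‖ ≤ b}, ⟪ξ, y⟫ ∂ν := by
              rw [← integral_const_mul]
        _ = (2 * π) * ⟪ξ, ∫ y in {y : Rd d | a < ‖y‖ ∧ ‖y‖ ≤ b}, y ∂ν⟫ := by
              rw [integral_inner hyid]
        _ = 0 := by
              rw [hν.2.2.2.2 rfl a b ha hab, inner_zero_right, mul_zero]
      have hIm1 : Integrable (fun y : Rd d => Real.sin (2 * π * ⟪ξ, y⟫)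
          - (if ‖y‖ ≤ 1 then 2 * π * ⟪ξ, y⟫ else 0)) ν := by
        have him' := hg.im
        simp only [RCLike.im_to_complex] at him'
        refine him'.congr (ae_of_all _ fun y => ?_)
        exact st11_im_aux _ _
      have him0 : (symb 1 ν ξ).im = ∫ y, (Real.sin (2 * π * ⟪ξ, y⟫)
          - (if ‖y‖ ≤ 1 then 2 * π * ⟪ξ, y⟫ else 0)) ∂ν := by
        have h := integral_im (μ := ν) hg
        simp only [RCLike.im_to_complex] at h
        rw [hsymbeq, ← h]
        apply integral_congr_ae
        exact ae_of_all _ fun y => st11_im_aux _ _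
      have himval : (symb 1 ν ξ).im = ∫ y, (Real.sin (2 * π * ⟪ξ, y⟫)
          - (if ‖y‖ ≤ R then 2 * π * ⟪ξ, y⟫ else 0)) ∂ν := by
        rcases lt_trichotomy R 1 with hR1 | hR1 | hR1
        · obtain ⟨hi, hz⟩ := hshell R 1 hR hR1
          have hsum : ∫ y, (Real.sin (2 * π * ⟪ξ, y⟫)
              - (if ‖y‖ ≤ R then 2 * π * ⟪ξ, y⟫ else 0)) ∂ν
              = (∫ y, (Real.sin (2 * π * ⟪ξ, y⟫)
                  - (if ‖y‖ ≤ 1 then 2 * π * ⟪ξ, y⟫ else 0)) ∂ν)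
                + ∫ y, ((if ‖y‖ ≤ 1 then 2 * π * ⟪ξ, y⟫ else 0)
                  - (if ‖y‖ ≤ R then 2 * π * ⟪ξ, y⟫ else 0)) ∂ν := by
            rw [← integral_add hIm1 hi]
            apply integral_congr_ae
            refine ae_of_all _ fun y => ?_
            simp only []
            ring
          rw [him0, hsum, hz, add_zero]
        · rw [him0, hR1]
        · obtain ⟨hi, hz⟩ := hshell 1 R one_pos hR1
          have hsum : ∫ y, (Real.sin (2 * π * ⟪ξ, y⟫)
              - (if ‖y‖ ≤ R then 2 * π * ⟪ξ, y⟫ else 0)) ∂ν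
              = (∫ y, (Real.sin (2 * π * ⟪ξ, y⟫)
                  - (if ‖y‖ ≤ 1 then 2 * π * ⟪ξ, y⟫ else 0)) ∂ν)
                - ∫ y, ((if ‖y‖ ≤ R then 2 * π * ⟪ξ, y⟫ else 0)
                  - (if ‖y‖ ≤ 1 then 2 * π * ⟪ξ, y⟫ else 0)) ∂ν := by
            rw [← integral_sub hIm1 hi]
            apply integral_congr_ae
            refine ae_of_all _ fun y => ?_
            simp only []
            ring
          rw [him0, hsum, hz, sub_zero]
      have hptw1 : ∀ y : Rd d, |Real.sin (2 * π * ⟪ξ, y⟫)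
          - (if ‖y‖ ≤ R then 2 * π * ⟪ξ, y⟫ else 0)| ≤ 4 * π ^ 2 * min (‖R⁻¹ • y‖ ^ 2) 1 := by
        intro y
        by_cases h : ‖y‖ ≤ R
        · rw [if_pos h]
          have hx1 : ‖R⁻¹ • y‖ ≤ 1 := hxle1 y h
          have hx0 : (0:ℝ) ≤ ‖R⁻¹ • y‖ := norm_nonneg _
          rw [min_eq_left (by nlinarith)]
          have hs := st11_sin_sub_sq (2 * π * ⟪ξ, y⟫)
          have e2 := mul_le_mul_of_nonneg_left (ht2sq y) (by positivity : (0:ℝ) ≤ 4 * π ^ 2)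
          nlinarith [sq_nonneg (π * ‖R⁻¹ • y‖)]
        · rw [if_neg h, sub_zero]
          have hx1 : 1 < ‖R⁻¹ • y‖ := hxgt1 y (not_le.1 h)
          rw [min_eq_right (by nlinarith [norm_nonneg (R⁻¹ • y)])]
          have := st11_abs_sin_le_one (2 * π * ⟪ξ, y⟫)
          nlinarith [Real.pi_gt_three]
      refine ⟨hremk _ hsymbeq hg (fun y => st11_re_aux _ _), ?_⟩
      have h6 : ENNReal.ofReal |(symb 1 ν ξ).im|
          ≤ ∫⁻ y, ENNReal.ofReal |Real.sin (2 * π * ⟪ξ, y⟫)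
            - (if ‖y‖ ≤ R then 2 * π * ⟪ξ, y⟫ else 0)| ∂ν := by
        rw [himval, ← Real.norm_eq_abs]
        calc ENNReal.ofReal ‖∫ y, (Real.sin (2 * π * ⟪ξ, y⟫)
            - (if ‖y‖ ≤ R then 2 * π * ⟪ξ, y⟫ else 0)) ∂ν‖
            ≤ ENNReal.ofReal (∫⁻ y, ENNReal.ofReal ‖Real.sin (2 * π * ⟪ξ, y⟫)
              - (if ‖y‖ ≤ R then 2 * π * ⟪ξ, y⟫ else 0)‖ ∂ν).toReal :=
              ENNReal.ofReal_le_ofReal (norm_integral_le_lintegral_norm _)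
        _ ≤ ∫⁻ y, ENNReal.ofReal ‖Real.sin (2 * π * ⟪ξ, y⟫)
              - (if ‖y‖ ≤ R then 2 * π * ⟪ξ, y⟫ else 0)‖ ∂ν := ENNReal.ofReal_toReal_le
        _ = ∫⁻ y, ENNReal.ofReal |Real.sin (2 * π * ⟪ξ, y⟫)
              - (if ‖y‖ ≤ R then 2 * π * ⟪ξ, y⟫ else 0)| ∂ν := by
              apply lintegral_congr
              intro y
              rw [Real.norm_eq_abs]
      have hZscaled : A * (∫⁻ y, ENNReal.ofReal (min (‖R⁻¹ • y‖ ^ 2) 1) ∂ν)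
          ≤ ENNReal.ofReal N2 := by
        rw [← st11_lint_scaled κ ν R _ hmin2meas]
        exact h2 rfl R hR
      calc A * ENNReal.ofReal |(symb 1 ν ξ).im|
          ≤ A * ∫⁻ y, ENNReal.ofReal |Real.sin (2 * π * ⟪ξ, y⟫)
            - (if ‖y‖ ≤ R then 2 * π * ⟪ξ, y⟫ else 0)| ∂ν := mul_le_mul_right h6 A
      _ ≤ A * ∫⁻ y, ENNReal.ofReal (4 * π ^ 2 * min (‖R⁻¹ • y‖ ^ 2) 1) ∂ν :=
            mul_le_mul_right (lintegral_mono fun y => ENNReal.ofReal_le_ofReal (hptw1 y)) A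
      _ = ENNReal.ofReal (4 * π ^ 2)
            * (A * ∫⁻ y, ENNReal.ofReal (min (‖R⁻¹ • y‖ ^ 2) 1) ∂ν) := by
            rw [hconstmul _ _ (by positivity) hm_minx2]
            ring
      _ ≤ ENNReal.ofReal (4 * π ^ 2) * ENNReal.ofReal N2 := mul_le_mul_right hZscaled _
    · -- case 1 < σ
      have hchi : ∀ y : Rd d, chiSigma σ y = 1 := fun y => by
        simp [chiSigma, lt_asymm hc, hc.ne']
      have hsymbeq : symb σ ν ξ
          = ∫ y, (Complex.exp (Complex.I * ((2 * π * ⟪ξ, y⟫ : ℝ) : ℂ)) - 1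
              - Complex.I * ((2 * π * ⟪ξ, y⟫ : ℝ) : ℂ)) ∂ν := by
        simp only [symb, hchi, mul_one] <;> rfl
      have hDle : ∀ y : Rd d, ‖y‖ ≤ R →
          ‖Complex.exp (Complex.I * ((2 * π * ⟪ξ, y⟫ : ℝ) : ℂ)) - 1
              - Complex.I * ((2 * π * ⟪ξ, y⟫ : ℝ) : ℂ)‖ ≤ 4 * π ^ 2 * ‖R⁻¹ • y‖ ^ 2 := by
        intro y _
        have hb := st11_norm_aux (2 * π * ⟪ξ, y⟫) (2 * π * ⟪ξ, y⟫)
        rw [st11_abs_cos_sub_one] at hb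
        have h1 := st11_one_sub_cos_le_sq (2 * π * ⟪ξ, y⟫)
        have hs := st11_sin_sub_sq (2 * π * ⟪ξ, y⟫)
        have e2 := mul_le_mul_of_nonneg_left (ht2sq y) (by positivity : (0:ℝ) ≤ 6 * π ^ 2)
        have hx0 : (0:ℝ) ≤ ‖R⁻¹ • y‖ := norm_nonneg _
        nlinarith [sq_nonneg (π * ‖R⁻¹ • y‖)]
      have hDgt : ∀ y : Rd d, R < ‖y‖ →
          ‖Complex.exp (Complex.I * ((2 * π * ⟪ξ, y⟫ : ℝ) : ℂ)) - 1
              - Complex.I * ((2 * π * ⟪ξ, y⟫ : ℝ) : ℂ)‖ ≤ 4 * π ^ 2 * ‖R⁻¹ • y‖ := by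
        intro y hy
        have hb := st11_norm_aux (2 * π * ⟪ξ, y⟫) (2 * π * ⟪ξ, y⟫)
        rw [st11_abs_cos_sub_one] at hb
        have h2 := st11_one_sub_cos_le_two (2 * π * ⟪ξ, y⟫)
        have hsub : |Real.sin (2 * π * ⟪ξ, y⟫) - 2 * π * ⟪ξ, y⟫|
            ≤ 1 + 2 * π * |⟪ξ, y⟫| := by
          have ha := abs_sub (Real.sin (2 * π * ⟪ξ, y⟫)) (2 * π * ⟪ξ, y⟫)
          have := st11_abs_sin_le_one (2 * π * ⟪ξ, y⟫)
          rw [habs2pi] at ha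
          linarith
        have hx1 : 1 < ‖R⁻¹ • y‖ := hxgt1 y hy
        have ht := hxt y
        have e := mul_le_mul_of_nonneg_left ht (by positivity : (0:ℝ) ≤ 2 * π)
        have hcoef : (0:ℝ) ≤ 4 * π ^ 2 - π - 3 := by nlinarith [Real.pi_gt_three]
        nlinarith [mul_nonneg hcoef (by linarith : (0:ℝ) ≤ ‖R⁻¹ • y‖ - 1),
          mul_nonneg hcoef (by linarith : (0:ℝ) ≤ ‖R⁻¹ • y‖)]
      have hg : Integrable (fun y : Rd d =>
          Complex.exp (Complex.I * ((2 * π * ⟪ξ, y⟫ : ℝ) : ℂ)) - 1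
            - Complex.I * ((2 * π * ⟪ξ, y⟫ : ℝ) : ℂ)) ν := by
        apply st11_integrable_of_dom (D := fun y =>
          if ‖y‖ ≤ 1 then 8 * π ^ 2 * (‖ξ‖ ^ 2 + 1) * ‖y‖ ^ 2
          else 8 * π ^ 2 * (‖ξ‖ ^ 2 + 1) * ‖y‖)
        · exact (((Complex.continuous_exp.comp (continuous_const.mul
            (Complex.continuous_ofReal.comp (continuous_const.mul hinner_cont)))).sub
            continuous_const).sub (continuous_const.mul
            (Complex.continuous_ofReal.comp (continuous_const.mul hinner_cont)))).aestronglyMeasurable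
        · intro y
          have hb := st11_norm_aux (2 * π * ⟪ξ, y⟫) (2 * π * ⟪ξ, y⟫)
          rw [st11_abs_cos_sub_one] at hb
          by_cases h : ‖y‖ ≤ 1
          · rw [if_pos h]
            have h1 := st11_one_sub_cos_le_sq (2 * π * ⟪ξ, y⟫)
            have hs := st11_sin_sub_sq (2 * π * ⟪ξ, y⟫)
            have e2 := mul_le_mul_of_nonneg_left (hsqbound y) (by positivity : (0:ℝ) ≤ 6 * π ^ 2)
            linarith [sq_nonneg (π * ‖ξ‖ * ‖y‖), sq_nonneg (π * ‖y‖)]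
          · rw [if_neg h]
            have hy1 : (1:ℝ) ≤ ‖y‖ := (not_le.1 h).le
            have h2 := st11_one_sub_cos_le_two (2 * π * ⟪ξ, y⟫)
            have hsub : |Real.sin (2 * π * ⟪ξ, y⟫) - 2 * π * ⟪ξ, y⟫|
                ≤ 1 + 2 * π * |⟪ξ, y⟫| := by
              have ha := abs_sub (Real.sin (2 * π * ⟪ξ, y⟫)) (2 * π * ⟪ξ, y⟫)
              have := st11_abs_sin_le_one (2 * π * ⟪ξ, y⟫)
              rw [habs2pi] at ha
              linarith
            have h5 := abs_real_inner_le_norm ξ y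
            have e1 := mul_le_mul_of_nonneg_left h5 (by positivity : (0:ℝ) ≤ 2 * π)
            have hAM : 2 * π * ‖ξ‖ ≤ π ^ 2 * ‖ξ‖ ^ 2 + 1 := by
              nlinarith [sq_nonneg (π * ‖ξ‖ - 1)]
            have e6 := mul_le_mul_of_nonneg_right hAM (norm_nonneg y)
            have hcoef : (0:ℝ) ≤ 8 * π ^ 2 * (‖ξ‖ ^ 2 + 1) - (π ^ 2 * ‖ξ‖ ^ 2 + 1) - 3 := by
              nlinarith [Real.pi_gt_three, sq_nonneg ‖ξ‖, sq_nonneg (π * ‖ξ‖)]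
            have e9 : (3:ℝ) ≤ 3 * ‖y‖ := by linarith
            have e10 := mul_nonneg hcoef (norm_nonneg y)
            nlinarith [e1, e6, e9, e10]
        · have hfin1 : ∫⁻ y in {y : Rd d | ‖y‖ ≤ 1}, ENNReal.ofReal (if ‖y‖ ≤ 1 then 8 * π ^ 2 * (‖ξ‖ ^ 2 + 1) * ‖y‖ ^ 2 else 8 * π ^ 2 * (‖ξ‖ ^ 2 + 1) * ‖y‖) ∂ν < ⊤ := by
            have hb1 : ∫⁻ y in {y : Rd d | ‖y‖ ≤ 1}, ENNReal.ofReal (if ‖y‖ ≤ 1 then 8 * π ^ 2 * (‖ξ‖ ^ 2 + 1) * ‖y‖ ^ 2 else 8 * π ^ 2 * (‖ξ‖ ^ 2 + 1) * ‖y‖) ∂ν ≤ ∫⁻ y in {y : Rd d | ‖y‖ ≤ 1}, ENNReal.ofReal (8 * π ^ 2 * (‖ξ‖ ^ 2 + 1) * min (‖y‖ ^ 2) 1) ∂ν := by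
              apply setLIntegral_mono' (st11_meas_le 1)
              intro y hy
              apply ENNReal.ofReal_le_ofReal
              have hy' : ‖y‖ ≤ 1 := hy
              rw [if_pos hy', min_eq_left (by nlinarith [norm_nonneg y])]
            exact lt_of_le_of_lt (hb1.trans (setLIntegral_le_lintegral _ _)) (hmin2fin _)
          have hfin2 : ∫⁻ y in {y : Rd d | 1 < ‖y‖}, ENNReal.ofReal (if ‖y‖ ≤ 1 then 8 * π ^ 2 * (‖ξ‖ ^ 2 + 1) * ‖y‖ ^ 2 else 8 * π ^ 2 * (‖ξ‖ ^ 2 + 1) * ‖y‖) ∂ν < ⊤ := by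
            have hb2 : ∫⁻ y in {y : Rd d | 1 < ‖y‖}, ENNReal.ofReal (if ‖y‖ ≤ 1 then 8 * π ^ 2 * (‖ξ‖ ^ 2 + 1) * ‖y‖ ^ 2 else 8 * π ^ 2 * (‖ξ‖ ^ 2 + 1) * ‖y‖) ∂ν = ENNReal.ofReal (8 * π ^ 2 * (‖ξ‖ ^ 2 + 1)) * ∫⁻ y in {y : Rd d | 1 < ‖y‖}, ENNReal.ofReal ‖y‖ ∂ν := by
              rw [← lintegral_const_mul _ continuous_norm.measurable.ennreal_ofReal]
              apply setLIntegral_congr_fun (st11_meas_gt 1)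
              exact fun y hy => by
                beta_reduce
                rw [if_neg (not_le.2 hy), ENNReal.ofReal_mul (by positivity)]
            rw [hb2]
            exact ENNReal.mul_lt_top ENNReal.ofReal_lt_top (hν.2.2.2.1 hc)
          rw [← lintegral_add_compl (μ := ν) (fun y => ENNReal.ofReal (if ‖y‖ ≤ 1 then 8 * π ^ 2 * (‖ξ‖ ^ 2 + 1) * ‖y‖ ^ 2 else 8 * π ^ 2 * (‖ξ‖ ^ 2 + 1) * ‖y‖)) (st11_meas_le 1), hcompl 1]
          exact ENNReal.add_lt_top.2 ⟨hfin1, hfin2⟩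
      refine ⟨hremk _ hsymbeq hg (fun y => st11_re_aux _ _), ?_⟩
      have hZ1 : ∫⁻ y in {y : Rd d | ‖y‖ ≤ 1}, ENNReal.ofReal (‖y‖ ^ 2) ∂scaledM κ ν R
          = A * ∫⁻ y in {y : Rd d | ‖y‖ ≤ R}, ENNReal.ofReal (‖R⁻¹ • y‖ ^ 2) ∂ν := by
        rw [st11_lint_scaled_set κ ν R (fun y => ENNReal.ofReal (‖y‖ ^ 2))
          ((continuous_norm.pow 2).measurable.ennreal_ofReal) _ (st11_meas_le 1),
          st11_preim_ball R hR]
      have hZ2 : ∫⁻ y in {y : Rd d | 1 < ‖y‖}, ENNReal.ofReal ‖y‖ ∂scaledM κ ν R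
          = A * ∫⁻ y in {y : Rd d | R < ‖y‖}, ENNReal.ofReal ‖R⁻¹ • y‖ ∂ν := by
        rw [st11_lint_scaled_set κ ν R (fun y => ENNReal.ofReal ‖y‖)
          (continuous_norm.measurable.ennreal_ofReal) _ (st11_meas_gt 1),
          st11_preim_gt R hR]
      have hM : ∫⁻ y, ENNReal.ofReal ‖Complex.exp (Complex.I * ((2 * π * ⟪ξ, y⟫ : ℝ) : ℂ)) - 1
            - Complex.I * ((2 * π * ⟪ξ, y⟫ : ℝ) : ℂ)‖ ∂ν
          ≤ ENNReal.ofReal (4 * π ^ 2)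
            * (∫⁻ y in {y : Rd d | ‖y‖ ≤ R}, ENNReal.ofReal (‖R⁻¹ • y‖ ^ 2) ∂ν
              + ∫⁻ y in {y : Rd d | R < ‖y‖}, ENNReal.ofReal ‖R⁻¹ • y‖ ∂ν) := by
        rw [← lintegral_add_compl (μ := ν) (fun y => ENNReal.ofReal
          ‖Complex.exp (Complex.I * ((2 * π * ⟪ξ, y⟫ : ℝ) : ℂ)) - 1
            - Complex.I * ((2 * π * ⟪ξ, y⟫ : ℝ) : ℂ)‖) (st11_meas_le R), hcompl R, mul_add]
        apply add_le_add
        · calc ∫⁻ y in {y : Rd d | ‖y‖ ≤ R}, ENNReal.ofReal ‖Complex.exp (Complex.I * ((2 * π * ⟪ξ, y⟫ : ℝ) : ℂ)) - 1 - Complex.I * ((2 * π * ⟪ξ, y⟫ : ℝ) : ℂ)‖ ∂ν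
              ≤ ∫⁻ y in {y : Rd d | ‖y‖ ≤ R}, ENNReal.ofReal (4 * π ^ 2) * ENNReal.ofReal (‖R⁻¹ • y‖ ^ 2) ∂ν := by
                apply setLIntegral_mono' (st11_meas_le R)
                intro y hy
                rw [← ENNReal.ofReal_mul (by positivity)]
                exact ENNReal.ofReal_le_ofReal (hDle y hy)
          _ = ENNReal.ofReal (4 * π ^ 2)
                * ∫⁻ y in {y : Rd d | ‖y‖ ≤ R}, ENNReal.ofReal (‖R⁻¹ • y‖ ^ 2) ∂ν := by
                rw [lintegral_const_mul _ hm_x2]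
        · calc ∫⁻ y in {y : Rd d | R < ‖y‖}, ENNReal.ofReal ‖Complex.exp (Complex.I * ((2 * π * ⟪ξ, y⟫ : ℝ) : ℂ)) - 1 - Complex.I * ((2 * π * ⟪ξ, y⟫ : ℝ) : ℂ)‖ ∂ν
              ≤ ∫⁻ y in {y : Rd d | R < ‖y‖}, ENNReal.ofReal (4 * π ^ 2) * ENNReal.ofReal ‖R⁻¹ • y‖ ∂ν := by
                apply setLIntegral_mono' (st11_meas_gt R)
                intro y hy
                rw [← ENNReal.ofReal_mul (by positivity)]
                exact ENNReal.ofReal_le_ofReal (hDgt y hy)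
          _ = ENNReal.ofReal (4 * π ^ 2)
                * ∫⁻ y in {y : Rd d | R < ‖y‖}, ENNReal.ofReal ‖R⁻¹ • y‖ ∂ν := by
                rw [lintegral_const_mul _ hm_x1]
      calc A * ENNReal.ofReal |(symb σ ν ξ).im|
          ≤ A * ∫⁻ y, ENNReal.ofReal ‖Complex.exp (Complex.I * ((2 * π * ⟪ξ, y⟫ : ℝ) : ℂ)) - 1
              - Complex.I * ((2 * π * ⟪ξ, y⟫ : ℝ) : ℂ)‖ ∂ν :=
            mul_le_mul_right (himmk _ hsymbeq) A
      _ ≤ A * (ENNReal.ofReal (4 * π ^ 2)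
            * (∫⁻ y in {y : Rd d | ‖y‖ ≤ R}, ENNReal.ofReal (‖R⁻¹ • y‖ ^ 2) ∂ν
              + ∫⁻ y in {y : Rd d | R < ‖y‖}, ENNReal.ofReal ‖R⁻¹ • y‖ ∂ν)) :=
            mul_le_mul_right hM A
      _ = ENNReal.ofReal (4 * π ^ 2)
            * ((A * ∫⁻ y in {y : Rd d | ‖y‖ ≤ R}, ENNReal.ofReal (‖R⁻¹ • y‖ ^ 2) ∂ν)
              + (A * ∫⁻ y in {y : Rd d | R < ‖y‖}, ENNReal.ofReal ‖R⁻¹ • y‖ ∂ν)) := by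
            ring
      _ = ENNReal.ofReal (4 * π ^ 2)
            * (∫⁻ y in {y : Rd d | ‖y‖ ≤ 1}, ENNReal.ofReal (‖y‖ ^ 2) ∂scaledM κ ν R
              + ∫⁻ y in {y : Rd d | 1 < ‖y‖}, ENNReal.ofReal ‖y‖ ∂scaledM κ ν R) := by
            rw [hZ1, hZ2]
      _ ≤ ENNReal.ofReal (4 * π ^ 2) * ENNReal.ofReal N2 :=
            mul_le_mul_right (h3 hc R hR) _
  obtain ⟨hre, him⟩ := key
  -- combine
  have hreabs : |(symb σ ν ξ).re| = Ire := by
    rw [hre, abs_neg, abs_of_nonneg hIre0]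
  have hcomb : ENNReal.ofReal (2 * n1 * |(symb σ ν ξ).im|)
      ≤ ENNReal.ofReal (4 * π ^ 2 * max N2 0 * Ire) := by
    calc ENNReal.ofReal (2 * n1 * |(symb σ ν ξ).im|)
        = ENNReal.ofReal (2 * n1) * ENNReal.ofReal |(symb σ ν ξ).im| :=
          ENNReal.ofReal_mul (by positivity)
    _ ≤ (A * ENNReal.ofReal Ire) * ENNReal.ofReal |(symb σ ν ξ).im| :=
          mul_le_mul_left hE1 _
    _ = (A * ENNReal.ofReal |(symb σ ν ξ).im|) * ENNReal.ofReal Ire := by ring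
    _ ≤ (ENNReal.ofReal (4 * π ^ 2) * ENNReal.ofReal N2) * ENNReal.ofReal Ire :=
          mul_le_mul_left him _
    _ ≤ (ENNReal.ofReal (4 * π ^ 2) * ENNReal.ofReal (max N2 0)) * ENNReal.ofReal Ire :=
          mul_le_mul_left (mul_le_mul_right (ENNReal.ofReal_le_ofReal (le_max_left _ _)) _) _
    _ = ENNReal.ofReal (4 * π ^ 2 * max N2 0 * Ire) := by
          rw [← ENNReal.ofReal_mul (by positivity), ← ENNReal.ofReal_mul (by positivity)]
  have hcombR : 2 * n1 * |(symb σ ν ξ).im| ≤ 4 * π ^ 2 * max N2 0 * Ire :=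
    (ENNReal.ofReal_le_ofReal_iff (by positivity)).1 hcomb
  have himK : |(symb σ ν ξ).im| ≤ K * |(symb σ ν ξ).re| := by
    rw [hreabs, hKdef]
    rw [div_mul_eq_mul_div, le_div_iff₀ (by positivity : (0:ℝ) < 2 * n1)]
    linarith
  have habs : ‖symb σ ν ξ‖ ≤ (1 + K) * |(symb σ ν ξ).re| := by
    calc ‖symb σ ν ξ‖ ≤ |(symb σ ν ξ).re| + |(symb σ ν ξ).im| :=
        Complex.norm_le_abs_re_add_abs_im _
    _ ≤ |(symb σ ν ξ).re| + K * |(symb σ ν ξ).re| := by linarith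
    _ = (1 + K) * |(symb σ ν ξ).re| := by ring
  refine ⟨?_, Complex.abs_re_le_norm _, ?_⟩
  · calc (1 + K)⁻¹ * ‖symb σ ν ξ‖
        ≤ (1 + K)⁻¹ * ((1 + K) * |(symb σ ν ξ).re|) := by
          exact mul_le_mul_of_nonneg_left habs (by positivity)
    _ = |(symb σ ν ξ).re| := by field_simp
  · rw [inv_inv]
    calc |(symb σ ν ξ).im| ≤ K * |(symb σ ν ξ).re| := himK
    _ ≤ (1 + K) * |(symb σ ν ξ).re| := by
        have := abs_nonneg (symb σ ν ξ).re
        nlinarith
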